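/- Let h: S → ℝ≥0 be a convex function on S ⊆ ℝ such that id - h is monotone non-decreasing (h is greed-admitting). Let (X_t) be a stochastic process on S adapted to a filtration (F_t) satisfying E[X_t - X_{t+1} | F_t] ≥ h(X_t) for all t. Define h̃(x) = x - h(x). Then for all t ≥ 0, E[X_t | F_0] ≤ h̃^t(X_0), where h̃^t denotes the t-fold composition of h̃. -/

import Mathlib

open MeasureTheory Filter


/-- Composition of a `MonotoneOn` function with a measurable map into the set is measurable. -/
lemma measurable_monotoneOn_comp' {g : ℝ → ℝ} {S : Set ℝ} (hg : MonotoneOn g S)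
    {Ω : Type*} [MeasurableSpace Ω] {Y : Ω → ℝ} (hY : Measurable Y) (hYS : ∀ ω, Y ω ∈ S) :
    Measurable fun ω => g (Y ω) := by
  apply measurable_of_Iio
  intro a
  have hset : (fun ω => g (Y ω)) ⁻¹' Set.Iio a
      = Y ⁻¹' {x | ∃ t, t ∈ S ∧ g t < a ∧ x ≤ t} := by
    ext ω
    simp only [Set.mem_preimage, Set.mem_Iio, Set.mem_setOf_eq]
    constructor
    · intro hga; exact ⟨Y ω, hYS ω, hga, le_rfl⟩
    · rintro ⟨t, htS, hta, hle⟩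
      exact lt_of_le_of_lt (hg (hYS ω) htS hle) hta
  rw [hset]
  apply hY
  have hoc : Set.OrdConnected {x | ∃ t, t ∈ S ∧ g t < a ∧ x ≤ t} := by
    refine ⟨fun x hx y hy z hz => ?_⟩
    obtain ⟨u, huS, hua, hyu⟩ := hy
    exact ⟨u, huS, hua, hz.2.trans hyu⟩
  exact hoc.measurableSet

/-- The sup of right slopes of `f` at `p` over `S`. -/
noncomputable def rslope' (f : ℝ → ℝ) (S : Set ℝ) (p : ℝ) : ℝ :=
  sSup ((fun x => (f x - f p) / (x - p)) '' (S ∩ Set.Ioi p))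

/-- Supporting line of a concave monotone function at a non-minimal point. -/
lemma support_line' {S : Set ℝ} {f : ℝ → ℝ} (hconc : ConcaveOn ℝ S f)
    (hmono : MonotoneOn f S) {p z : ℝ} (hp : p ∈ S) (hz : z ∈ S) (hzp : z < p) :
    0 ≤ rslope' f S p ∧ rslope' f S p ≤ (f p - f z) / (p - z) ∧
      ∀ y ∈ S, f y ≤ f p + rslope' f S p * (y - p) := by
  set E := (fun x => (f x - f p) / (x - p)) '' (S ∩ Set.Ioi p) with hE
  have hub : ∀ e ∈ E, e ≤ (f p - f z) / (p - z) := by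
    rintro e ⟨x, ⟨hxS, hxp⟩, rfl⟩
    exact hconc.slope_anti_adjacent hz hxS hzp hxp
  have hbdd : BddAbove E := ⟨_, hub⟩
  have hCmem : rslope' f S p = sSup E := rfl
  rcases E.eq_empty_or_nonempty with hEe | hEne
  · have hC : rslope' f S p = 0 := by rw [hCmem, hEe, Real.sSup_empty]
    have hfz : f z ≤ f p := hmono hz hp hzp.le
    refine ⟨le_of_eq hC.symm, by rw [hC]; exact div_nonneg (by linarith) (by linarith), ?_⟩
    intro y hy
    have hyp : y ≤ p := by
      by_contra hlt
      have hmem : (f y - f p) / (y - p) ∈ E := ⟨y, ⟨hy, lt_of_not_ge hlt⟩, rfl⟩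
      rw [hEe] at hmem
      exact hmem
    have := hmono hy hp hyp
    rw [hC]; linarith
  · have hC0 : 0 ≤ rslope' f S p := by
      obtain ⟨e, he⟩ := hEne
      obtain ⟨x, ⟨hxS, hxp⟩, rfl⟩ := he
      have hpx : p < x := hxp
      have h1 : 0 ≤ (f x - f p) / (x - p) :=
        div_nonneg (sub_nonneg.2 (hmono hp hxS hpx.le)) (by linarith)
      have h2 := le_csSup hbdd (⟨x, ⟨hxS, hxp⟩, rfl⟩ : (f x - f p) / (x - p) ∈ E)
      rw [hCmem]; linarith
    have hCle : rslope' f S p ≤ (f p - f z) / (p - z) := by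
      rw [hCmem]; exact csSup_le hEne hub
    refine ⟨hC0, hCle, ?_⟩
    intro y hy
    rcases lt_trichotomy y p with hyp | heq | hyp
    · have hCy : rslope' f S p ≤ (f p - f y) / (p - y) := by
        rw [hCmem]
        refine csSup_le hEne ?_
        rintro e ⟨x, ⟨hxS, hxp⟩, rfl⟩
        exact hconc.slope_anti_adjacent hy hxS hyp hxp
      have hpy : 0 < p - y := by linarith
      have hmul := mul_le_mul_of_nonneg_right hCy hpy.le
      rw [div_mul_cancel₀ _ (ne_of_gt hpy)] at hmul
      have hring : rslope' f S p * (y - p) = -(rslope' f S p * (p - y)) := by ring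
      linarith [hring, hmul]
    · subst heq; simp
    · have hmem : (f y - f p) / (y - p) ∈ E := ⟨y, ⟨hy, hyp⟩, rfl⟩
      have hle := le_csSup hbdd hmem
      have hyp' : 0 < y - p := by linarith
      have hmul := mul_le_mul_of_nonneg_right hle hyp'.le
      rw [div_mul_cancel₀ _ (ne_of_gt hyp')] at hmul
      rw [hCmem]
      linarith

/-- Direct fixed-budget drift theorem, unlimited time (Theorem 2). -/
theorem direct_fixed_budget_drift_unlimited
    {Ω : Type*} {m0 : MeasurableSpace Ω} {μ : Measure Ω} [IsProbabilityMeasure μ]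
    (ℱ : Filtration ℕ m0) (X : ℕ → Ω → ℝ) (S : Set ℝ) (h : ℝ → ℝ)
    (hmemS : ∀ t ω, X t ω ∈ S)
    (hconv : ConvexOn ℝ S h)
    (hnonneg : ∀ x ∈ S, 0 ≤ h x)
    (hgreed : MonotoneOn (fun x => x - h x) S)
    (hadapted : Adapted ℱ X)
    (hint : ∀ t, Integrable (X t) μ)
    (hdrift : ∀ t, ∀ᵐ ω ∂μ,
      h (X t ω) ≤ (μ[fun ω' => X t ω' - X (t + 1) ω' | ℱ t]) ω) :
    ∀ t, ∀ᵐ ω ∂μ, (μ[X t | ℱ 0]) ω ≤ (fun x => x - h x)^[t] (X 0 ω) := by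
  set g : ℝ → ℝ := fun x => x - h x with hg_def
  -- S is nonempty and ord-connected
  have hΩ : Nonempty Ω := by
    rcases isEmpty_or_nonempty Ω with hE | hN
    · exfalso
      have h1 : μ Set.univ = 1 := measure_univ
      rw [Set.univ_eq_empty_iff.mpr hE, measure_empty] at h1
      exact zero_ne_one h1
    · exact hN
  have hSne : S.Nonempty := ⟨X 0 (Classical.arbitrary Ω), hmemS 0 _⟩
  have hoc : Set.OrdConnected S := hconv.1.ordConnected
  have hconc : ConcaveOn ℝ S g := by
    have : g = (id - h) := rfl
    rw [this]
    exact (concaveOn_id hconv.1).sub hconv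
  -- measurability
  have hXmeas : ∀ t, Measurable (X t) := fun t => (hadapted t).mono (ℱ.le t) le_rfl
  have hgXmeas : ∀ t, Measurable (fun ω => g (X t ω)) := fun t =>
    measurable_monotoneOn_comp' hgreed (hXmeas t) (hmemS t)
  -- integrability of g ∘ X t
  have hgXint : ∀ t, Integrable (fun ω => g (X t ω)) μ := by
    intro t
    have hD : Integrable (μ[fun ω' => X t ω' - X (t + 1) ω' | ℱ t]) μ := integrable_condExp
    refine Integrable.mono ((hint t).abs.add hD.abs) (hgXmeas t).aestronglyMeasurable ?_
    filter_upwards [hdrift t] with ω hω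
    have h1 : 0 ≤ h (X t ω) := hnonneg _ (hmemS t ω)
    have h2 : |h (X t ω)| ≤ |(μ[fun ω' => X t ω' - X (t + 1) ω' | ℱ t]) ω| := by
      rw [abs_of_nonneg h1]
      exact hω.trans (le_abs_self _)
    have h3 : |g (X t ω)| ≤ |X t ω| + |h (X t ω)| := by
      simp only [hg_def]
      rw [sub_eq_add_neg]
      exact (abs_add_le _ _).trans (by rw [abs_neg])
    simp only [Real.norm_eq_abs, Pi.add_apply, Pi.abs_apply]
    rw [abs_of_nonneg (by positivity : (0:ℝ) ≤ |X t ω| + |(μ[fun ω' => X t ω' - X (t + 1) ω' | ℱ t]) ω|)]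
    linarith
  -- main induction
  suffices H : ∀ t, ∀ᵐ ω ∂μ,
      (μ[X t | ℱ 0]) ω ≤ g^[t] (X 0 ω) ∧ g^[t] (X 0 ω) ∈ S by
    intro t
    filter_upwards [H t] with ω hω using hω.1
  intro t
  induction t with
  | zero =>
    have hX0 : μ[X 0 | ℱ 0] = X 0 :=
      condExp_of_stronglyMeasurable (ℱ.le 0) (hadapted 0).stronglyMeasurable (hint 0)
    filter_upwards with ω
    rw [hX0]
    exact ⟨le_rfl, hmemS 0 ω⟩
  | succ t ih =>
    -- F1 : μ[X (t+1)|ℱ 0] ≤ μ[g ∘ X t|ℱ 0] a.e.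
    have hXt_fix : μ[X t | ℱ t] = X t :=
      condExp_of_stronglyMeasurable (ℱ.le t) (hadapted t).stronglyMeasurable (hint t)
    have hsub : μ[fun ω' => X t ω' - X (t + 1) ω' | ℱ t]
        =ᵐ[μ] μ[X t | ℱ t] - μ[X (t+1) | ℱ t] := by
      have hfg : (fun ω' => X t ω' - X (t + 1) ω') = X t - X (t+1) := rfl
      rw [hfg]
      exact condExp_sub (hint t) (hint (t+1)) _
    have step1 : μ[X (t+1) | ℱ t] ≤ᵐ[μ] fun ω => g (X t ω) := by
      filter_upwards [hdrift t, hsub] with ω h1 h2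
      rw [h2, Pi.sub_apply, hXt_fix] at h1
      simp only [hg_def]
      linarith
    have F1 : μ[X (t+1) | ℱ 0] ≤ᵐ[μ] μ[fun ω => g (X t ω) | ℱ 0] := by
      have h2 := condExp_mono (m := ℱ 0) integrable_condExp (hgXint t) step1
      have h3 := condExp_condExp_of_le (f := X (t+1)) (μ := μ) (ℱ.mono (Nat.zero_le t)) (ℱ.le t)
      filter_upwards [h2, h3] with ω ha hb
      rw [← hb]
      exact ha
    -- F2 : rational supporting lines
    have F2 : ∀ q : ℚ, ∀ᵐ ω ∂μ, ((q:ℝ) ∈ S ∧ ∃ z ∈ S, z < (q:ℝ)) →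
        (μ[fun ω => g (X t ω) | ℱ 0]) ω
          ≤ g q + rslope' g S q * ((μ[X t | ℱ 0]) ω - q) := by
      intro q
      by_cases hq : (q:ℝ) ∈ S ∧ ∃ z ∈ S, z < (q:ℝ)
      · obtain ⟨hqS, z, hzS, hzq⟩ := hq
        obtain ⟨hC0, hCle, hsupp⟩ := support_line' hconc hgreed hqS hzS hzq
        set C := rslope' g S q with hC_def
        have hpt : (fun ω => g (X t ω)) ≤ᵐ[μ]
            fun ω => (g q - C * q) + C * X t ω := by
          filter_upwards with ω
          have := hsupp _ (hmemS t ω)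
          linarith [this]
        have hint2 : Integrable (fun ω => (g q - C * q) + C * X t ω) μ := by
          exact (integrable_const _).add ((hint t).const_mul _)
        have hmono2 := condExp_mono (m := ℱ 0) (hgXint t) hint2 hpt
        have haff : μ[(fun ω => (g q - C * q) + C * X t ω) | ℱ 0]
            =ᵐ[μ] fun ω => (g q - C * q) + C * (μ[X t | ℱ 0]) ω := by
          have hrw : (fun ω => (g q - C * q) + C * X t ω)
              = (fun _ => (g q - C * q)) + C • (X t) := by
            funext ω; simp [smul_eq_mul]
          rw [hrw]
          have h4 := condExp_add (μ := μ) (m := ℱ 0)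
            (integrable_const (g q - C * q)) ((hint t).smul C)
          have h5 := condExp_smul (μ := μ) (m := ℱ 0) C (X t)
          filter_upwards [h4, h5] with ω ha hb
          simp only [Pi.add_apply] at ha ⊢
          rw [ha, condExp_const (ℱ.le 0)]
          simp only [Pi.smul_apply, smul_eq_mul] at hb ⊢
          rw [hb]
        filter_upwards [hmono2, haff] with ω h1 h2 _
        rw [h2] at h1
        linarith [h1]
      · filter_upwards with ω hcond
        exact absurd hcond hq
    have F2' : ∀ᵐ ω ∂μ, ∀ q : ℚ, ((q:ℝ) ∈ S ∧ ∃ z ∈ S, z < (q:ℝ)) →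
        (μ[fun ω => g (X t ω) | ℱ 0]) ω
          ≤ g q + rslope' g S q * ((μ[X t | ℱ 0]) ω - q) := ae_all_iff.mpr F2
    -- F3 : degenerate least-element case
    have F3 : ∀ᵐ ω ∂μ, ∀ mS : ℝ, IsLeast S mS → (μ[X t | ℱ 0]) ω ≤ mS →
        (μ[fun ω => g (X t ω) | ℱ 0]) ω ≤ g mS := by
      rcases em (∃ mS, IsLeast S mS) with ⟨mS, hmS⟩ | hno
      · set G : Set Ω := {ω | (μ[X t | ℱ 0]) ω ≤ mS} with hG_def
        have hGmeas : MeasurableSet[ℱ 0] G :=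
          measurableSet_le (stronglyMeasurable_condExp (m := ℱ 0)).measurable measurable_const
        have hGmeas0 : MeasurableSet G := (ℱ.le 0) _ hGmeas
        have hintsub : Integrable (fun ω => X t ω - mS) μ := (hint t).sub (integrable_const _)
        have hIle : ∫ ω in G, (X t ω - mS) ∂μ ≤ 0 := by
          have heq1 : ∫ ω in G, X t ω ∂μ = ∫ ω in G, (μ[X t | ℱ 0]) ω ∂μ :=
            (setIntegral_condExp (ℱ.le 0) (hint t) hGmeas).symm
          have heq2 : ∫ ω in G, (X t ω - mS) ∂μ
              = ∫ ω in G, X t ω ∂μ - ∫ ω in G, (fun _ => mS) ω ∂μ :=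
            integral_sub (hint t).integrableOn (integrable_const _).integrableOn
          have hle3 : ∫ ω in G, (μ[X t | ℱ 0]) ω ∂μ ≤ ∫ ω in G, (fun _ => mS) ω ∂μ := by
            refine setIntegral_mono_on integrable_condExp.integrableOn
              (integrable_const _).integrableOn hGmeas0 ?_
            intro ω hω
            exact hω
          rw [heq2, heq1]
          linarith
        have hnn : 0 ≤ᵐ[μ.restrict G] fun ω => X t ω - mS :=
          ae_of_all _ fun ω => sub_nonneg.2 (hmS.2 (hmemS t ω))
        have hIz : ∫ ω in G, (X t ω - mS) ∂μ = 0 :=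
          le_antisymm hIle (integral_nonneg_of_ae hnn)
        have hzero : (fun ω => X t ω - mS) =ᵐ[μ.restrict G] 0 :=
          (integral_eq_zero_iff_of_nonneg_ae hnn hintsub.integrableOn).mp hIz
        have hgeq : (fun ω => g (X t ω)) =ᵐ[μ.restrict G] fun _ => g mS := by
          filter_upwards [hzero] with ω hω
          have hX : X t ω = mS := by simpa [sub_eq_zero] using hω
          rw [hX]
        have hgeq' : ∀ᵐ ω ∂μ, ω ∈ G → g (X t ω) = g mS := by
          have := (ae_restrict_iff' hGmeas0).mp hgeq
          filter_upwards [this] with ω hω hmem using hω hmem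
        have hind : G.indicator (fun ω => g (X t ω)) =ᵐ[μ] G.indicator (fun _ => g mS) := by
          filter_upwards [hgeq'] with ω hω
          by_cases hmem : ω ∈ G
          · rw [Set.indicator_of_mem hmem, Set.indicator_of_mem hmem, hω hmem]
          · rw [Set.indicator_of_notMem hmem, Set.indicator_of_notMem hmem]
        have hcond1 := condExp_indicator (μ := μ) (m := ℱ 0) (hgXint t) hGmeas
        have hcond2 : μ[G.indicator (fun _ => g mS) | ℱ 0] = G.indicator (fun _ => g mS) :=
          condExp_of_stronglyMeasurable (ℱ.le 0)
            (stronglyMeasurable_const.indicator hGmeas)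
            ((integrable_const _).indicator hGmeas0)
        have hcondeq := condExp_congr_ae (m := ℱ 0) hind
        have hfinal : ∀ᵐ ω ∂μ, G.indicator (μ[fun ω => g (X t ω) | ℱ 0]) ω
            = G.indicator (fun _ => g mS) ω := by
          filter_upwards [hcond1, hcondeq] with ω h1 h2
          rw [← h1, h2, hcond2]
        filter_upwards [hfinal] with ω hω mS' hmS' hle
        have hmSeq : mS' = mS := hmS'.unique hmS
        subst hmSeq
        have hmem : ω ∈ G := hle
        rw [Set.indicator_of_mem hmem, Set.indicator_of_mem hmem] at hω
        exact le_of_eq hω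
      · filter_upwards with ω mS' hmS' _
        exact absurd ⟨mS', hmS'⟩ hno
    -- F4 : a.e. there is a point of S below μ[X (t+1)|ℱ 0]
    have F4 : ∀ᵐ ω ∂μ, ∃ s ∈ S, s ≤ (μ[X (t+1) | ℱ 0]) ω := by
      by_cases hbdd : BddBelow S
      · set m := sInf S with hm_def
        by_cases hmem : m ∈ S
        · have hle : (fun _ : Ω => m) ≤ᵐ[μ] X (t+1) :=
            ae_of_all _ fun ω => csInf_le hbdd (hmemS _ ω)
          have hmono3 := condExp_mono (m := ℱ 0) (integrable_const m) (hint (t+1)) hle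
          rw [condExp_const (ℱ.le 0)] at hmono3
          filter_upwards [hmono3] with ω hω
          exact ⟨m, hmem, hω⟩
        · -- strict inequality
          set G' : Set Ω := {ω | (μ[X (t+1) | ℱ 0]) ω ≤ m} with hG'_def
          have hG'meas : MeasurableSet[ℱ 0] G' :=
            measurableSet_le (stronglyMeasurable_condExp (m := ℱ 0)).measurable measurable_const
          have hG'meas0 : MeasurableSet G' := (ℱ.le 0) _ hG'meas
          have hpos : ∀ ω, 0 < X (t+1) ω - m := by
            intro ω
            have h1 : m ≤ X (t+1) ω := csInf_le hbdd (hmemS _ ω)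
            have h2 : X (t+1) ω ≠ m := fun hc => hmem (hc ▸ hmemS (t+1) ω)
            cases lt_or_eq_of_le h1 with
            | inl hlt => linarith
            | inr heq => exact absurd heq.symm h2
          have hintsub : Integrable (fun ω => X (t+1) ω - m) μ :=
            (hint (t+1)).sub (integrable_const _)
          have hIle : ∫ ω in G', (X (t+1) ω - m) ∂μ ≤ 0 := by
            have heq1 : ∫ ω in G', X (t+1) ω ∂μ = ∫ ω in G', (μ[X (t+1) | ℱ 0]) ω ∂μ :=
              (setIntegral_condExp (ℱ.le 0) (hint (t+1)) hG'meas).symm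
            have heq2 : ∫ ω in G', (X (t+1) ω - m) ∂μ
                = ∫ ω in G', X (t+1) ω ∂μ - ∫ ω in G', (fun _ => m) ω ∂μ :=
              integral_sub (hint (t+1)).integrableOn (integrable_const _).integrableOn
            have hle3 : ∫ ω in G', (μ[X (t+1) | ℱ 0]) ω ∂μ ≤ ∫ ω in G', (fun _ => m) ω ∂μ := by
              refine setIntegral_mono_on integrable_condExp.integrableOn
                (integrable_const _).integrableOn hG'meas0 ?_
              intro ω hω
              exact hω
            rw [heq2, heq1]
            linarith
          have hnn : 0 ≤ᵐ[μ.restrict G'] fun ω => X (t+1) ω - m :=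
            ae_of_all _ fun ω => (hpos ω).le
          have hIz : ∫ ω in G', (X (t+1) ω - m) ∂μ = 0 :=
            le_antisymm hIle (integral_nonneg_of_ae hnn)
          have hzero : (fun ω => X (t+1) ω - m) =ᵐ[μ.restrict G'] 0 :=
            (integral_eq_zero_iff_of_nonneg_ae hnn hintsub.integrableOn).mp hIz
          have hcontra : ∀ᵐ ω ∂μ, ω ∉ G' := by
            have := (ae_restrict_iff' hG'meas0).mp hzero
            filter_upwards [this] with ω hω
            intro hmem'
            have := hω hmem'
            simp only [Pi.zero_apply] at this
            exact absurd this (ne_of_gt (hpos ω))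
          filter_upwards [hcontra] with ω hω
          have hlt : m < (μ[X (t+1) | ℱ 0]) ω := lt_of_not_ge hω
          obtain ⟨s, hsS, hs⟩ := exists_lt_of_csInf_lt hSne hlt
          exact ⟨s, hsS, hs.le⟩
      · filter_upwards with ω
        obtain ⟨s, hsS, hs⟩ := not_bddBelow_iff.mp hbdd ((μ[X (t+1) | ℱ 0]) ω)
        exact ⟨s, hsS, hs.le⟩
    -- combine everything pointwise a.e.
    filter_upwards [ih, F1, F2', F3, F4] with ω hih hF1 hF2 hF3 hF4
    obtain ⟨hy_le_p, hpS⟩ := hih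
    set p := g^[t] (X 0 ω) with hp_def
    set y := (μ[X t | ℱ 0]) ω with hy_def
    have hYgp : (μ[fun ω => g (X t ω) | ℱ 0]) ω ≤ g p := by
      rcases em (∃ z ∈ S, z < p) with ⟨z, hzS, hzp⟩ | hnope
      · refine le_of_forall_pos_le_add ?_
        intro ε hε
        set d := (p - z) / 2 with hd_def
        have hd0 : 0 < d := by simp only [hd_def]; linarith
        set K := (g p - g z) / d with hK_def
        have hK0 : 0 ≤ K := div_nonneg (sub_nonneg.2 (hgreed hzS hpS hzp.le)) hd0.le
        set δ := min d (ε / (K + 1)) with hδ_def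
        have hδ0 : 0 < δ := lt_min hd0 (div_pos hε (by linarith))
        have hδd : δ ≤ d := min_le_left _ _
        have hδε : δ ≤ ε / (K + 1) := min_le_right _ _
        have hlt : max (z + d) (p - δ) < p := by
          apply max_lt
          · simp only [hd_def]; linarith
          · linarith
        obtain ⟨q, hq1, hq2⟩ := exists_rat_btwn hlt
        have hzd_le : z + d ≤ max (z + d) (p - δ) := le_max_left _ _
        have hpδ_le : p - δ ≤ max (z + d) (p - δ) := le_max_right _ _
        have hzq : z < q := by linarith
        have hqp : (q:ℝ) < p := hq2
        have hqS : (q:ℝ) ∈ S := hoc.out hzS hpS ⟨hzq.le, hqp.le⟩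
        have hF2q := hF2 q ⟨hqS, ⟨z, hzS, hzq⟩⟩
        obtain ⟨hC0, hCle, _⟩ := support_line' hconc hgreed hqS hzS hzq
        have hq_z : d ≤ (q:ℝ) - z := by linarith
        have hgq_le : g q ≤ g p := hgreed hqS hpS hqp.le
        have hCK : rslope' g S q ≤ K := by
          refine hCle.trans ?_
          rw [hK_def]
          exact div_le_div₀ (sub_nonneg.2 (hgreed hzS hpS hzp.le))
            (by linarith) hd0 hq_z
        have hq_p : p - (q:ℝ) ≤ δ := by linarith
        have hstep1 : (μ[fun ω => g (X t ω) | ℱ 0]) ω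
            ≤ g q + rslope' g S q * (y - q) := hF2q
        have hstep2 : rslope' g S q * (y - q) ≤ rslope' g S q * (p - q) :=
          mul_le_mul_of_nonneg_left (by linarith) hC0
        have hstep3 : rslope' g S q * (p - q) ≤ K * δ := by
          have h1 : rslope' g S q * (p - q) ≤ K * (p - q) :=
            mul_le_mul_of_nonneg_right hCK (by linarith)
          have h2 : K * (p - q) ≤ K * δ := mul_le_mul_of_nonneg_left hq_p hK0
          linarith
        have hstep4 : K * δ ≤ ε := by
          have h1 : K * δ ≤ K * (ε / (K + 1)) := mul_le_mul_of_nonneg_left hδε hK0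
          have hK1 : (0:ℝ) < K + 1 := by linarith
          have h2 : K * (ε / (K + 1)) ≤ ε := by
            rw [mul_comm, div_mul_eq_mul_div, div_le_iff₀ hK1]
            nlinarith [hε.le, hK0]
          linarith
        linarith
      · have hleast : IsLeast S p := ⟨hpS, fun s hs => not_lt.1 fun hsp => hnope ⟨s, hs, hsp⟩⟩
        exact hF3 p hleast hy_le_p
    have hmain : (μ[X (t+1) | ℱ 0]) ω ≤ g^[t+1] (X 0 ω) := by
      rw [Function.iterate_succ_apply']
      exact hF1.trans hYgp
    refine ⟨hmain, ?_⟩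
    rw [Function.iterate_succ_apply']
    obtain ⟨s, hsS, hs_le⟩ := hF4
    have h_up : g p ≤ p := by
      have := hnonneg p hpS
      simp only [hg_def]
      linarith
    have h_lo : s ≤ g p := hs_le.trans (hF1.trans hYgp)
    exact hoc.out hsS hpS ⟨h_lo, h_up⟩
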